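/- Let σ > 0, c_G > 0, Δ ≥ 2σc_G, and let G : [0,∞) → ℝ be continuously differentiable with G(0) = 1, G'(x) ≤ 0 for all x ≥ 0, G(x) → 0 as x → ∞, and x ↦ |G'(x)| monotonically decreasing on (c_G, ∞). Then (1/(4σ)) · ∫_{−∞}^{∞} |G'(|y + Δ/2|/σ) − G'(|y − Δ/2|/σ)| dy ≤ 1 − (1/2)·G(Δ/(2σ) + 2c_G). -/

import Mathlib

open MeasureTheory Filter Set

lemma my_integrable_comp_abs {f : ℝ → ℝ} (hf : IntegrableOn f (Set.Ioi 0)) :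
    Integrable (fun x => f |x|) := by
  have h1 : IntegrableOn (fun x => f |x|) (Set.Ioi 0) :=
    hf.congr_fun (fun x hx => by rw [abs_of_pos hx]) measurableSet_Ioi
  have h2 : IntegrableOn (fun x => f |x|) (Set.Iic 0) := by
    rw [← Measure.map_neg_eq_self (volume : Measure ℝ)]
    have m : MeasurableEmbedding fun x : ℝ => -x := (Homeomorph.neg ℝ).measurableEmbedding
    rw [m.integrableOn_map_iff]
    simp_rw [Function.comp_def, abs_neg, neg_preimage, neg_Iic, neg_zero]
    exact Iff.mpr integrableOn_Ici_iff_integrableOn_Ioi h1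
  have h3 := h2.union h1
  rwa [Set.Iic_union_Ioi, integrableOn_univ] at h3

lemma aux_improper (G : ℝ → ℝ) (σ b q : ℝ) (hσ : 0 < σ) (hq : 0 ≤ q + b)
    (hGc : ContinuousOn G (Set.Ici 0))
    (hdiff : ∀ x : ℝ, 0 < x → HasDerivAt G (deriv G x) x)
    (hG' : ∀ x : ℝ, 0 ≤ x → deriv G x ≤ 0)
    (hGlim : Tendsto G atTop (nhds 0)) :
    IntegrableOn (fun x => -deriv G ((x + b) / σ)) (Set.Ioi q) ∧
      ∫ x in Set.Ioi q, -deriv G ((x + b) / σ) = σ * G ((q + b) / σ) := by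
  set g : ℝ → ℝ := fun x => -σ * G ((x + b) / σ) with hg
  have hmap : ∀ x : ℝ, q ≤ x → (0:ℝ) ≤ (x + b) / σ := fun x hx =>
    div_nonneg (by linarith) hσ.le
  have hderiv : ∀ x ∈ Set.Ioi q, HasDerivAt g (-deriv G ((x + b) / σ)) x := by
    intro x hx
    have hx0 : 0 < (x + b) / σ := div_pos (by simp only [mem_Ioi] at hx; linarith) hσ
    have h1 : HasDerivAt (fun y : ℝ => (y + b) / σ) (1 / σ) x := by
      simpa using ((hasDerivAt_id x).add_const b).div_const σ
    have h2 := ((hdiff _ hx0).comp x h1).const_mul (-σ)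
    have h3 : -σ * (deriv G ((x + b) / σ) * (1 / σ)) = -deriv G ((x + b) / σ) := by
      field_simp
    exact h3 ▸ h2
  have hcont : ContinuousWithinAt g (Set.Ici q) q := by
    have h1 : ContinuousWithinAt (fun y : ℝ => (y + b) / σ) (Set.Ici q) q :=
      (Continuous.continuousWithinAt (by continuity))
    have h2 : ContinuousWithinAt G (Set.Ici 0) ((q + b) / σ) :=
      hGc _ (by simpa using div_nonneg hq hσ.le)
    exact (ContinuousWithinAt.comp (f := fun y : ℝ => (y + b) / σ) h2 h1
      (fun x hx => hmap x hx)).const_mul (-σ)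
  have g'pos : ∀ x ∈ Set.Ioi q, 0 ≤ -deriv G ((x + b) / σ) := fun x hx =>
    neg_nonneg.mpr (hG' _ (hmap x (le_of_lt hx)))
  have htend : Tendsto g atTop (nhds 0) := by
    have h1 : Tendsto (fun x : ℝ => (x + b) / σ) atTop atTop :=
      (tendsto_atTop_add_const_right _ b tendsto_id).atTop_div_const hσ
    have h2 := (hGlim.comp h1).const_mul (-σ)
    rw [mul_zero] at h2
    exact h2
  have hint := integrableOn_Ioi_deriv_of_nonneg hcont hderiv g'pos htend
  refine ⟨hint, ?_⟩
  rw [integral_Ioi_of_hasDerivAt_of_tendsto hcont hderiv hint htend]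
  simp only [hg]; ring

lemma aux_interval (G : ℝ → ℝ) (σ b p q : ℝ) (hσ : 0 < σ) (hpb : 0 < p + b) (hpq : p ≤ q)
    (hcd : ContinuousOn (deriv G) (Set.Ioi 0))
    (hdiff : ∀ x : ℝ, 0 < x → HasDerivAt G (deriv G x) x) :
    ∫ x in p..q, -deriv G ((x + b) / σ) = σ * (G ((p + b) / σ) - G ((q + b) / σ)) := by
  have huIcc : Set.uIcc p q = Set.Icc p q := Set.uIcc_of_le hpq
  have hmap : ∀ x ∈ Set.uIcc p q, (0:ℝ) < (x + b) / σ := by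
    intro x hx
    rw [huIcc] at hx
    exact div_pos (by linarith [hx.1]) hσ
  have hderiv : ∀ x ∈ Set.uIcc p q, HasDerivAt (fun y => -σ * G ((y + b) / σ)) (-deriv G ((x + b) / σ)) x := by
    intro x hx
    have h1 : HasDerivAt (fun y : ℝ => (y + b) / σ) (1 / σ) x := by
      simpa using ((hasDerivAt_id x).add_const b).div_const σ
    have h2 := ((hdiff _ (hmap x hx)).comp x h1).const_mul (-σ)
    have h3 : -σ * (deriv G ((x + b) / σ) * (1 / σ)) = -deriv G ((x + b) / σ) := by
      field_simp
    exact h3 ▸ h2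
  have hii : IntervalIntegrable (fun x => -deriv G ((x + b) / σ)) volume p q := by
    apply ContinuousOn.intervalIntegrable
    exact ((hcd.comp ((continuous_id.add continuous_const).div_const σ).continuousOn
      (fun x hx => hmap x hx)).neg)
  rw [intervalIntegral.integral_eq_sub_of_hasDerivAt hderiv hii]
  ring


set_option maxHeartbeats 1000000 in
lemma aux_main (σ c m : ℝ) (hσ : 0 < σ) (hc : 0 < c) (hmc : σ * c ≤ m)
    (G : ℝ → ℝ)
    (hG : ContDiffOn ℝ 1 G (Set.Ici 0))
    (hG0 : G 0 = 1)
    (hG' : ∀ x : ℝ, 0 ≤ x → deriv G x ≤ 0)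
    (hGlim : Tendsto G atTop (nhds 0))
    (hanti : AntitoneOn (fun x => |deriv G x|) (Set.Ioi c)) :
    (1 / (4 * σ)) * (∫ y : ℝ, |deriv G (|y + m| / σ) - deriv G (|y - m| / σ)|)
      ≤ 1 - (1 / 2) * G (m / σ + 2 * c) := by
  have hm0 : 0 < m := lt_of_lt_of_le (by positivity) hmc
  have hGc : ContinuousOn G (Set.Ici 0) := hG.continuousOn
  have hdiff : ∀ x : ℝ, 0 < x → HasDerivAt G (deriv G x) x := fun x hx =>
    ((hG.differentiableOn one_ne_zero).differentiableAt (Ici_mem_nhds hx)).hasDerivAt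
  have hcd : ContinuousOn (deriv G) (Set.Ioi 0) :=
    (hG.mono Set.Ioi_subset_Ici_self).continuousOn_deriv_of_isOpen isOpen_Ioi le_rfl
  have hnn : ∀ x : ℝ, 0 ≤ x → 0 ≤ -deriv G x := fun x hx => neg_nonneg.mpr (hG' x hx)
  -- the three auxiliary functions
  set P : ℝ → ℝ := fun y => -deriv G (|y + m| / σ) with hP_def
  set Q : ℝ → ℝ := fun y => -deriv G (|y - m| / σ) with hQ_def
  set φ : ℝ → ℝ := fun y => -deriv G ((|y| + m) / σ) with hφ_def
  set S : Set ℝ := {y : ℝ | σ * c < |(|y| - m)|} with hS_def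
  set R : ℝ → ℝ := S.indicator φ with hR_def
  have hPnn : ∀ y, 0 ≤ P y := fun y => hnn _ (div_nonneg (abs_nonneg _) hσ.le)
  have hQnn : ∀ y, 0 ≤ Q y := fun y => hnn _ (div_nonneg (abs_nonneg _) hσ.le)
  have hφnn : ∀ y, 0 ≤ φ y := fun y => hnn _ (div_nonneg (by positivity) hσ.le)
  -- basic integrability
  have hbase0 := aux_improper G σ 0 0 hσ (by norm_num) hGc hdiff hG' hGlim
  have hbase : Integrable (fun y : ℝ => -deriv G (|y| / σ)) := by
    have h := my_integrable_comp_abs (f := fun x => -deriv G ((x + 0) / σ)) hbase0.1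
    simpa using h
  have hPint : Integrable P := by
    have emb : MeasurableEmbedding (fun y : ℝ => y + m) :=
      (Homeomorph.addRight m).measurableEmbedding
    have h1 : MeasurePreserving (fun y : ℝ => y + m) volume volume :=
      measurePreserving_add_right (volume : Measure ℝ) m
    exact (h1.integrable_comp_emb emb).mpr hbase
  have hQint : Integrable Q := by
    have emb : MeasurableEmbedding (fun y : ℝ => y + (-m)) :=
      (Homeomorph.addRight (-m)).measurableEmbedding
    have h1 : MeasurePreserving (fun y : ℝ => y + (-m)) volume volume :=
      measurePreserving_add_right (volume : Measure ℝ) (-m)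
    have h := (h1.integrable_comp_emb emb).mpr hbase
    simpa [Function.comp_def, sub_eq_add_neg, hQ_def] using h
  have hIoi0 : ∫ x in Set.Ioi (0:ℝ), -deriv G (x / σ) = σ := by
    have h := hbase0.2
    simp only [add_zero, zero_add, zero_div, hG0, mul_one] at h
    exact h
  have hPval : ∫ y : ℝ, P y = 2 * σ := by
    have h1 : ∫ y : ℝ, P y = ∫ y : ℝ, -deriv G (|y| / σ) :=
      integral_add_right_eq_self (μ := volume) (fun y : ℝ => -deriv G (|y| / σ)) m
    rw [h1, integral_comp_abs (f := fun x => -deriv G (x / σ)), hIoi0]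
  have hQval : ∫ y : ℝ, Q y = 2 * σ := by
    have h1 : ∫ y : ℝ, Q y = ∫ y : ℝ, -deriv G (|y| / σ) := by
      have := integral_add_right_eq_self (μ := volume) (fun y : ℝ => -deriv G (|y| / σ)) (-m)
      simpa [sub_eq_add_neg, hQ_def] using this
    rw [h1, integral_comp_abs (f := fun x => -deriv G (x / σ)), hIoi0]
  -- φ properties
  have hφcont : Continuous φ := by
    have h1 : Continuous (fun y : ℝ => (|y| + m) / σ) := by continuity
    have h2 : ∀ y : ℝ, (|y| + m) / σ ∈ Set.Ioi (0:ℝ) := fun y => by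
      simp only [Set.mem_Ioi]; positivity
    exact (hcd.comp_continuous h1 h2).neg
  have hφle : ∀ y, φ y ≤ P y + Q y := by
    intro y
    rcases le_or_gt 0 y with hy | hy
    · have h1 : |y + m| = |y| + m := by
        rw [abs_of_nonneg (by linarith), abs_of_nonneg hy]
      have h2 : φ y = P y := by simp only [hφ_def, hP_def, h1]
      linarith [hQnn y]
    · have h1 : |y - m| = |y| + m := by
        rw [abs_of_neg (by linarith), abs_of_neg hy]; ring
      have h2 : φ y = Q y := by simp only [hφ_def, hQ_def, h1]
      linarith [hPnn y]
  have hφint : Integrable φ :=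
    Integrable.mono' (hPint.add hQint) hφcont.aestronglyMeasurable
      (ae_of_all _ fun y => by
        rw [Real.norm_eq_abs, abs_of_nonneg (hφnn y)]; exact hφle y)
  have hSmeas : MeasurableSet S :=
    measurableSet_lt measurable_const ((continuous_abs.sub continuous_const).abs.measurable)
  have hRint : Integrable R := hφint.indicator hSmeas
  -- pointwise key inequality
  have hkey : ∀ y : ℝ, |deriv G (|y + m| / σ) - deriv G (|y - m| / σ)| ≤ P y + Q y - 2 * R y := by
    intro y
    by_cases hyS : y ∈ S
    · have hRy : R y = φ y := Set.indicator_of_mem hyS φ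
      have hv : σ * c < |(|y| - m)| := hyS
      have hvc : c < |(|y| - m)| / σ := by rw [lt_div_iff₀ hσ]; linarith
      have huv : |(|y| - m)| / σ ≤ (|y| + m) / σ := by
        apply (div_le_div_iff_of_pos_right hσ).mpr
        exact abs_le.mpr ⟨by linarith [abs_nonneg y], by linarith [abs_nonneg y]⟩
      have huc : c < (|y| + m) / σ := lt_of_lt_of_le hvc huv
      have hu0 : (0:ℝ) ≤ (|y| + m) / σ := div_nonneg (by positivity) hσ.le
      have hv0 : (0:ℝ) ≤ |(|y| - m)| / σ := div_nonneg (abs_nonneg _) hσ.le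
      have hmono : -deriv G ((|y| + m) / σ) ≤ -deriv G (|(|y| - m)| / σ) := by
        have h := hanti (Set.mem_Ioi.mpr hvc) (Set.mem_Ioi.mpr huc) huv
        simp only at h
        rwa [abs_of_nonpos (hG' _ hu0), abs_of_nonpos (hG' _ hv0)] at h
      have habs : |deriv G ((|y| + m) / σ) - deriv G (|(|y| - m)| / σ)|
          = deriv G ((|y| + m) / σ) - deriv G (|(|y| - m)| / σ) :=
        abs_of_nonneg (by linarith)
      rcases le_or_gt 0 y with hy | hy
      · have e1 : |y + m| = |y| + m := by
          rw [abs_of_nonneg (by linarith), abs_of_nonneg hy]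
        have e2 : |y - m| = |(|y| - m)| := by rw [abs_of_nonneg hy]
        rw [e1, e2, hRy]
        simp only [hP_def, hQ_def, hφ_def, e1, e2]
        rw [habs]; linarith
      · have e1 : |y + m| = |(|y| - m)| := by
          rw [abs_of_neg hy, abs_sub_comm]; congr 1; ring
        have e2 : |y - m| = |y| + m := by
          rw [abs_of_neg (by linarith : y - m < 0), abs_of_neg hy]; ring
        rw [e1, e2, hRy,
          abs_sub_comm (deriv G (|(|y| - m)| / σ)) (deriv G ((|y| + m) / σ))]
        simp only [hP_def, hQ_def, hφ_def, e1, e2]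
        rw [habs]; linarith
    · have hRy : R y = 0 := Set.indicator_of_notMem hyS φ
      rw [hRy]
      have h1 := abs_sub (deriv G (|y + m| / σ)) (deriv G (|y - m| / σ))
      rw [abs_of_nonpos (hG' _ (div_nonneg (abs_nonneg _) hσ.le)),
        abs_of_nonpos (hG' _ (div_nonneg (abs_nonneg _) hσ.le))] at h1
      simp only [hP_def, hQ_def]
      linarith
  -- integrability of the LHS integrand
  have hPQ : Integrable (fun y => P y + Q y) := hPint.add hQint
  have h2R : Integrable (fun y => 2 * R y) := hRint.const_mul 2
  have hmeasA : Measurable fun y : ℝ => deriv G (|y + m| / σ) :=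
    (measurable_deriv G).comp (((continuous_id.add continuous_const).abs.div_const σ).measurable)
  have hmeasB : Measurable fun y : ℝ => deriv G (|y - m| / σ) :=
    (measurable_deriv G).comp (((continuous_id.sub continuous_const).abs.div_const σ).measurable)
  have hABint : Integrable fun y : ℝ => |deriv G (|y + m| / σ) - deriv G (|y - m| / σ)| := by
    refine Integrable.mono' hPQ ((hmeasA.sub hmeasB).abs.aestronglyMeasurable)
      (ae_of_all _ fun y => ?_)
    rw [Real.norm_eq_abs, abs_abs]
    have h1 := abs_sub (deriv G (|y + m| / σ)) (deriv G (|y - m| / σ))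
    rw [abs_of_nonpos (hG' _ (div_nonneg (abs_nonneg _) hσ.le)),
      abs_of_nonpos (hG' _ (div_nonneg (abs_nonneg _) hσ.le))] at h1
    simp only [hP_def, hQ_def]
    linarith
  have hsum : Integrable fun y => P y + Q y - 2 * R y := hPQ.sub h2R
  have hIle : (∫ y : ℝ, |deriv G (|y + m| / σ) - deriv G (|y - m| / σ)|)
      ≤ (2 * σ) + (2 * σ) - 2 * ∫ y : ℝ, R y := by
    calc (∫ y : ℝ, |deriv G (|y + m| / σ) - deriv G (|y - m| / σ)|)
        ≤ ∫ y : ℝ, (P y + Q y - 2 * R y) := integral_mono hABint hsum hkey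
      _ = (∫ y : ℝ, P y) + (∫ y : ℝ, Q y) - 2 * ∫ y : ℝ, R y := by
          rw [integral_sub hPQ h2R, integral_add hPint hQint, integral_const_mul]
      _ = (2 * σ) + (2 * σ) - 2 * ∫ y : ℝ, R y := by rw [hPval, hQval]
  -- lower bound for ∫ R
  have hRlow : σ * G (m / σ + 2 * c) ≤ ∫ y : ℝ, R y := by
    have h0 : ∫ y : ℝ, R y = ∫ y in S, φ y := integral_indicator hSmeas
    have hsub1 : Set.Ioo 0 (m - σ * c) ⊆ S := by
      intro y hy
      have h1 : |y| = y := abs_of_pos hy.1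
      simp only [hS_def, Set.mem_setOf_eq, h1]
      rw [abs_of_neg (by linarith [hy.2, mul_pos hσ hc] : y - m < 0)]
      linarith [hy.2]
    have hsub2 : Set.Ioi (m + σ * c) ⊆ S := by
      intro y hy
      simp only [Set.mem_Ioi] at hy
      have hy0 : 0 < y := by nlinarith [mul_pos hσ hc]
      have h1 : |y| = y := abs_of_pos hy0
      simp only [hS_def, Set.mem_setOf_eq, h1]
      rw [abs_of_pos (by nlinarith [mul_pos hσ hc] : 0 < y - m)]
      linarith
    have hT : Set.Ioo 0 (m - σ * c) ∪ Set.Ioi (m + σ * c) ⊆ S := Set.union_subset hsub1 hsub2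
    have hdisj : Disjoint (Set.Ioo 0 (m - σ * c)) (Set.Ioi (m + σ * c)) := by
      apply Set.disjoint_left.mpr
      intro x hx1 hx2
      simp only [Set.mem_Ioo] at hx1
      simp only [Set.mem_Ioi] at hx2
      nlinarith [mul_pos hσ hc]
    have hmono2 : ∫ y in (Set.Ioo 0 (m - σ * c) ∪ Set.Ioi (m + σ * c)), φ y ≤ ∫ y in S, φ y :=
      setIntegral_mono_set hφint.integrableOn (ae_restrict_of_ae (ae_of_all _ hφnn))
        (HasSubset.Subset.eventuallyLE hT)
    have hsplitT : ∫ y in (Set.Ioo 0 (m - σ * c) ∪ Set.Ioi (m + σ * c)), φ y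
        = (∫ y in Set.Ioo 0 (m - σ * c), φ y) + ∫ y in Set.Ioi (m + σ * c), φ y :=
      setIntegral_union hdisj measurableSet_Ioi hφint.integrableOn hφint.integrableOn
    have hIoo : ∫ y in Set.Ioo 0 (m - σ * c), φ y
        = σ * (G ((0 + m) / σ) - G ((m - σ * c + m) / σ)) := by
      have hcongr : ∫ y in Set.Ioo 0 (m - σ * c), φ y
          = ∫ y in Set.Ioo 0 (m - σ * c), -deriv G ((y + m) / σ) :=
        setIntegral_congr_fun measurableSet_Ioo (fun y hy => by
          simp only [hφ_def]; rw [abs_of_pos hy.1])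
      rw [hcongr, ← integral_Ioc_eq_integral_Ioo,
        ← intervalIntegral.integral_of_le (by linarith : (0:ℝ) ≤ m - σ * c)]
      exact aux_interval G σ m 0 (m - σ * c) hσ (by linarith) (by linarith) hcd hdiff
    have hIoi : ∫ y in Set.Ioi (m + σ * c), φ y = σ * G ((m + σ * c + m) / σ) := by
      have hcongr : ∫ y in Set.Ioi (m + σ * c), φ y
          = ∫ y in Set.Ioi (m + σ * c), -deriv G ((y + m) / σ) :=
        setIntegral_congr_fun measurableSet_Ioi (fun y hy => by
          simp only [hφ_def]
          rw [abs_of_pos (by nlinarith [mul_pos hσ hc, Set.mem_Ioi.mp hy] : (0:ℝ) < y)])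
      rw [hcongr]
      exact (aux_improper G σ m (m + σ * c) hσ (by nlinarith [mul_pos hσ hc]) hGc hdiff
        hG' hGlim).2
    have e0 : (0 + m) / σ = m / σ := by rw [zero_add]
    have e1 : (m - σ * c + m) / σ = 2 * (m / σ) - c := by field_simp; ring
    have e2 : (m + σ * c + m) / σ = 2 * (m / σ) + c := by field_simp; ring
    have hca : c ≤ m / σ := (le_div_iff₀ hσ).mpr (by linarith)
    have ha0 : 0 < m / σ := div_pos hm0 hσ
    have ftc : ∀ p q : ℝ, 0 < p → p ≤ q → ∫ x in p..q, -deriv G x = G p - G q := by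
      intro p q hp hpq
      have h1 : ∀ x ∈ Set.uIcc p q, HasDerivAt (fun t => -G t) (-deriv G x) x := by
        intro x hx
        rw [Set.uIcc_of_le hpq] at hx
        exact (hdiff x (lt_of_lt_of_le hp hx.1)).neg
      have h2 : IntervalIntegrable (fun x => -deriv G x) volume p q := by
        apply ContinuousOn.intervalIntegrable
        apply (hcd.mono ?_).neg
        rw [Set.uIcc_of_le hpq]
        intro x hx
        exact lt_of_lt_of_le hp hx.1
      rw [intervalIntegral.integral_eq_sub_of_hasDerivAt h1 h2]
      ring
    have hshift : ∫ x in (m / σ)..(m / σ + 2 * c), -deriv G x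
        = ∫ x in (2 * (m / σ) - c)..(2 * (m / σ) + c), -deriv G (x - (m / σ - c)) := by
      rw [intervalIntegral.integral_comp_sub_right (fun t => -deriv G t) (m / σ - c)]
      congr 1 <;> ring
    have hptwise : ∀ x ∈ Set.Icc (2 * (m / σ) - c) (2 * (m / σ) + c),
        -deriv G x ≤ -deriv G (x - (m / σ - c)) := by
      intro x hx
      rcases eq_or_lt_of_le hca with heq | hlt
      · rw [← heq, sub_self, sub_zero]
      · have hx1 : c < x - (m / σ - c) := by linarith [hx.1]
        have hx2 : c < x := by linarith [hx.1]
        have hle : x - (m / σ - c) ≤ x := by linarith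
        have h := hanti (Set.mem_Ioi.mpr hx1) (Set.mem_Ioi.mpr hx2) hle
        simp only at h
        rwa [abs_of_nonpos (hG' _ (by linarith)), abs_of_nonpos (hG' _ (by linarith))] at h
    have hcompare : ∫ x in (2 * (m / σ) - c)..(2 * (m / σ) + c), -deriv G x
        ≤ ∫ x in (m / σ)..(m / σ + 2 * c), -deriv G x := by
      rw [hshift]
      apply intervalIntegral.integral_mono_on (by linarith) ?_ ?_ hptwise
      · apply ContinuousOn.intervalIntegrable
        apply (hcd.mono ?_).neg
        rw [Set.uIcc_of_le (by linarith : 2 * (m / σ) - c ≤ 2 * (m / σ) + c)]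
        intro x hx
        simp only [Set.mem_Ioi]
        linarith [hx.1]
      · apply ContinuousOn.intervalIntegrable
        apply ContinuousOn.neg
        apply hcd.comp (continuous_id.sub continuous_const).continuousOn
        rw [Set.uIcc_of_le (by linarith : 2 * (m / σ) - c ≤ 2 * (m / σ) + c)]
        intro x hx
        simp only [Set.mem_Ioi]
        have := hx.1
        simp only [Pi.sub_apply, id_eq]
        linarith [hx.1]
    have hcomp : G (m / σ + 2 * c) - G (2 * (m / σ) + c) ≤ G (m / σ) - G (2 * (m / σ) - c) := by
      have hA := ftc (m / σ) (m / σ + 2 * c) ha0 (by linarith)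
      have hB := ftc (2 * (m / σ) - c) (2 * (m / σ) + c) (by linarith) (by linarith)
      rw [hA] at hcompare
      rw [hB] at hcompare
      linarith
    have h9 : G (m / σ + 2 * c)
        ≤ G ((0 + m) / σ) - G ((m - σ * c + m) / σ) + G ((m + σ * c + m) / σ) := by
      rw [e0, e1, e2]; linarith
    calc σ * G (m / σ + 2 * c)
        ≤ σ * (G ((0 + m) / σ) - G ((m - σ * c + m) / σ)) + σ * G ((m + σ * c + m) / σ) := by
          nlinarith [mul_le_mul_of_nonneg_left h9 hσ.le]
      _ = (∫ y in Set.Ioo 0 (m - σ * c), φ y) + ∫ y in Set.Ioi (m + σ * c), φ y := by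
          rw [hIoo, hIoi]
      _ = ∫ y in (Set.Ioo 0 (m - σ * c) ∪ Set.Ioi (m + σ * c)), φ y := hsplitT.symm
      _ ≤ ∫ y in S, φ y := hmono2
      _ = ∫ y : ℝ, R y := h0.symm
  -- final assembly
  have hσne : σ ≠ 0 := ne_of_gt hσ
  calc (1 / (4 * σ)) * (∫ y : ℝ, |deriv G (|y + m| / σ) - deriv G (|y - m| / σ)|)
      ≤ (1 / (4 * σ)) * (4 * σ - 2 * (σ * G (m / σ + 2 * c))) := by
        apply mul_le_mul_of_nonneg_left ?_ (by positivity)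
        linarith [hIle, hRlow]
    _ = 1 - (1 / 2) * G (m / σ + 2 * c) := by field_simp; ring


/-- Key total-variation estimate in the proof of the minimax mislabeling lower
bound: for the density `y ↦ −(1/(2σ))·G'(|y|/σ)` and its location shifts by
`∓Δ/2`, the total variation distance is at most `1 − (1/2)·G(Δ/(2σ) + 2c_G)`. -/
theorem total_variation_shift_bound
    (σ c_G Δ : ℝ) (hσ : 0 < σ) (hc_G : 0 < c_G) (hΔ : 2 * σ * c_G ≤ Δ)
    (G : ℝ → ℝ)
    (hG : ContDiffOn ℝ 1 G (Set.Ici 0))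
    (hG0 : G 0 = 1)
    (hG' : ∀ x : ℝ, 0 ≤ x → deriv G x ≤ 0)
    (hGlim : Tendsto G atTop (nhds 0))
    (hanti : AntitoneOn (fun x => |deriv G x|) (Set.Ioi c_G)) :
    (1 / (4 * σ)) * (∫ y : ℝ, |deriv G (|y + Δ / 2| / σ) - deriv G (|y - Δ / 2| / σ)|)
      ≤ 1 - (1 / 2) * G (Δ / (2 * σ) + 2 * c_G) := by
  have h := aux_main σ c_G (Δ / 2) hσ hc_G (by linarith) G hG hG0 hG' hGlim hanti
  rwa [div_div] at h
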